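/- arXiv:1006.5445 — 5 statements merged into one kernel-verified Lean document; each statement's English description precedes it below -/
import Mathlib

section
/- Let Σ ∈ ℂ^{n×n} be positive semidefinite with Tr(Σ) > 0, and let M be a natural number with M ≥ 1 and M ≥ rank(Σ). Then there exist unit vectors t_1, …, t_M ∈ ℂ^n such that Σ = ∑_{m=1}^M p_m t_m t_m† with p_m = Tr(Σ)/M for every m; that is, Σ can be decomposed into M rank-one streams over which the transmit power is uniformly allocated. -/
open Matrix BigOperators
open scoped ComplexOrder
open Complex in
private theorem aux_geom (M : ℕ) (hM : 0 < M) (k l : Fin M) (hkl : k ≠ l) :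
    ∑ m : Fin M, (Complex.exp (2 * Real.pi * I * (((k:ℕ):ℂ) - ((l:ℕ):ℂ)) / M)) ^ (m:ℕ) = 0 := by
  set ζ : ℂ := Complex.exp (2 * Real.pi * I * (((k:ℕ):ℂ) - ((l:ℕ):ℂ)) / M) with hζ
  have hMC : (M:ℂ) ≠ 0 := Nat.cast_ne_zero.mpr hM.ne'
  have hζM : ζ ^ M = 1 := by
    rw [hζ, ← Complex.exp_nat_mul]
    have h1 : (M:ℂ) * (2 * Real.pi * I * (((k:ℕ):ℂ) - ((l:ℕ):ℂ)) / M)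
        = ((((k:ℕ):ℤ) - ((l:ℕ):ℤ) : ℤ) : ℂ) * (2 * Real.pi * I) := by
      push_cast; field_simp
    rw [h1, Complex.exp_int_mul_two_pi_mul_I]
  have hζ1 : ζ ≠ 1 := by
    intro h
    rw [hζ, Complex.exp_eq_one_iff] at h
    obtain ⟨z, hz⟩ := h
    have hpi : (2 * (Real.pi:ℂ) * I) ≠ 0 := by
      simp [Real.pi_ne_zero, Complex.I_ne_zero]
    have hc : (((k:ℕ):ℂ) - ((l:ℕ):ℂ)) = (z:ℂ) * M := by
      field_simp at hz
      apply mul_left_cancel₀ hpi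
      linear_combination (2 * (Real.pi:ℂ) * I) * hz
    have h2 : ((k:ℕ):ℤ) - ((l:ℕ):ℤ) = z * M := by exact_mod_cast hc
    have hdne : ((k:ℕ):ℤ) - ((l:ℕ):ℤ) ≠ 0 := by
      simp only [sub_ne_zero]
      exact_mod_cast fun h => hkl (Fin.ext h)
    have hdvd : (M:ℤ) ∣ ((k:ℕ):ℤ) - ((l:ℕ):ℤ) := ⟨z, by linarith [h2]⟩
    have h4 := Int.le_of_dvd (abs_pos.mpr hdne) ((dvd_abs _ _).mpr hdvd)
    have hk := k.isLt; have hl := l.isLt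
    have h5 : |((k:ℕ):ℤ) - ((l:ℕ):ℤ)| < M := abs_lt.mpr ⟨by omega, by omega⟩
    linarith
  calc ∑ m : Fin M, ζ ^ (m:ℕ) = ∑ m ∈ Finset.range M, ζ ^ m := by
        exact Fin.sum_univ_eq_sum_range _ _
    _ = (ζ ^ M - 1) / (ζ - 1) := geom_sum_eq hζ1 M
    _ = 0 := by rw [hζM]; simp

/-- Any positive semidefinite covariance matrix `S` with positive trace can be
decomposed into `M` rank-one streams (`M ≥ 1`, `M ≥ rank S`) over unit transmit vectors with
uniform power allocation `p_m = Tr(S)/M`. -/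
theorem equal_power_decomposition {n : ℕ}
    (S : Matrix (Fin n) (Fin n) ℂ) (hS : S.PosSemidef)
    (htr : 0 < S.trace.re)
    (M : ℕ) (hM1 : 1 ≤ M) (hMrank : S.rank ≤ M) :
    ∃ t : Fin M → (Fin n → ℂ),
      (∀ m : Fin M, star (t m) ⬝ᵥ t m = 1) ∧
      S = ∑ m : Fin M, (S.trace.re / (M : ℝ)) • vecMulVec (t m) (star (t m)) := by
  classical
  have hH := hS.1
  have hM0 : 0 < M := hM1
  have hMC : (M:ℂ) ≠ 0 := Nat.cast_ne_zero.mpr hM0.ne'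
  set lam : Fin n → ℝ := hH.eigenvalues with hlam
  have hlam0 : ∀ i, 0 ≤ lam i := fun i => hS.eigenvalues_nonneg i
  set U : Matrix (Fin n) (Fin n) ℂ := (hH.eigenvectorUnitary : Matrix (Fin n) (Fin n) ℂ) with hU
  set v : Fin n → Fin n → ℂ := fun i a => U a i with hv
  -- orthonormality of eigenvector columns
  have hUU : star U * U = 1 := (Unitary.mem_iff.mp hH.eigenvectorUnitary.2).1
  have horth : ∀ i j, (∑ a, (starRingEnd ℂ) (v i a) * v j a) = if i = j then 1 else 0 := by
    intro i j
    have h := congrFun (congrFun hUU i) j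
    simpa [Matrix.mul_apply, Matrix.one_apply, Matrix.star_apply, RCLike.star_def] using h
  -- entrywise spectral theorem
  have hs : ∀ a b, S a b = ∑ i, (lam i : ℂ) * (v i a * (starRingEnd ℂ) (v i b)) := by
    intro a b
    conv_lhs => rw [hH.spectral_theorem, Unitary.conjStarAlgAut_apply]
    rw [Matrix.mul_apply]
    refine Finset.sum_congr rfl fun i _ => ?_
    rw [Matrix.mul_diagonal, Matrix.star_apply]
    simp only [Function.comp_apply, RCLike.star_def, hv, ← hU, ← hlam]
    exact (mul_assoc (U a i) _ ((starRingEnd ℂ) (U b i))).trans (mul_left_comm (U a i) _ _)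
  -- trace = sum of eigenvalues
  have htrace : S.trace = ∑ i, (lam i : ℂ) := by
    rw [Matrix.trace]
    simp only [Matrix.diag]
    calc ∑ a, S a a = ∑ a, ∑ i, (lam i : ℂ) * (v i a * (starRingEnd ℂ) (v i a)) := by
          exact Finset.sum_congr rfl fun a _ => hs a a
      _ = ∑ i, (lam i : ℂ) * (∑ a, (starRingEnd ℂ) (v i a) * v i a) := by
          rw [Finset.sum_comm]
          refine Finset.sum_congr rfl fun i _ => ?_
          rw [Finset.mul_sum]
          exact Finset.sum_congr rfl fun a _ => by ring
      _ = ∑ i, (lam i : ℂ) := by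
          refine Finset.sum_congr rfl fun i _ => ?_
          rw [horth i i, if_pos rfl, mul_one]
  have htrre : S.trace.re = ∑ i, lam i := by
    rw [htrace]; push_cast; simp
  -- embedding of nonzero-eigenvalue indices into Fin M
  have hcard : Fintype.card {i // lam i ≠ 0} ≤ Fintype.card (Fin M) := by
    rw [Fintype.card_fin, ← hH.rank_eq_card_non_zero_eigs]
    exact hMrank
  obtain ⟨f⟩ := Function.Embedding.nonempty_of_card_le hcard
  set σ : Fin n → Fin M := fun i => if h : lam i ≠ 0 then f ⟨i, h⟩ else ⟨0, hM0⟩ with hσdef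
  have hσ : ∀ i j, lam i ≠ 0 → lam j ≠ 0 → σ i = σ j → i = j := by
    intro i j hi hj hij
    simp only [hσdef, dif_pos hi, dif_pos hj] at hij
    exact congrArg Subtype.val (f.injective hij)
  -- phases
  set e : Fin M → Fin M → ℂ :=
    fun m k => Complex.exp (2 * Real.pi * Complex.I * ((m:ℕ):ℂ) * ((k:ℕ):ℂ) / M) with he
  have hconj_e : ∀ m k, (starRingEnd ℂ) (e m k) * e m k = 1 := by
    intro m k
    rw [he, ← Complex.exp_conj, ← Complex.exp_add]
    rw [← Complex.exp_zero]
    congr 1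
    have h1 : (starRingEnd ℂ) (2 * Real.pi * Complex.I * ((m:ℕ):ℂ) * ((k:ℕ):ℂ) / M)
        = - (2 * Real.pi * Complex.I * ((m:ℕ):ℂ) * ((k:ℕ):ℂ) / M) := by
      simp only [map_div₀, _root_.map_mul, Complex.conj_I, Complex.conj_ofReal,
        map_natCast, map_ofNat]
      ring
    rw [h1]; ring
  have key : ∀ k l : Fin M, ∑ m : Fin M, e m k * (starRingEnd ℂ) (e m l)
      = if k = l then (M:ℂ) else 0 := by
    intro k l
    have hterm : ∀ m : Fin M, e m k * (starRingEnd ℂ) (e m l)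
        = (Complex.exp (2 * Real.pi * Complex.I * (((k:ℕ):ℂ) - ((l:ℕ):ℂ)) / M)) ^ (m:ℕ) := by
      intro m
      rw [he, ← Complex.exp_conj, ← Complex.exp_add, ← Complex.exp_nat_mul]
      congr 1
      simp only [map_div₀, _root_.map_mul, Complex.conj_I, Complex.conj_ofReal,
        map_natCast, map_ofNat]
      ring
    rw [Finset.sum_congr rfl fun m _ => hterm m]
    by_cases hkl : k = l
    · subst hkl
      simp
    · rw [if_neg hkl]
      exact aux_geom M hM0 k l hkl
  -- the stream vectors (unnormalized)
  set w : Fin M → Fin n → ℂ :=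
    fun m a => ∑ i, (Real.sqrt (lam i) : ℂ) * e m (σ i) * v i a with hw
  -- inner products expansion helper
  have inner_expand : ∀ (c d : Fin n → ℂ),
      (∑ a, (starRingEnd ℂ) (∑ i, c i * v i a) * (∑ j, d j * v j a))
        = ∑ i, (starRingEnd ℂ) (c i) * d i := by
    intro c d
    have h0 : ∀ a, (starRingEnd ℂ) (∑ i, c i * v i a) * (∑ j, d j * v j a)
        = ∑ i, ∑ j, ((starRingEnd ℂ) (c i) * d j) * ((starRingEnd ℂ) (v i a) * v j a) := by
      intro a
      rw [map_sum, Finset.sum_mul_sum]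
      refine Finset.sum_congr rfl fun i _ => Finset.sum_congr rfl fun j _ => ?_
      rw [_root_.map_mul]; ring
    rw [Finset.sum_congr rfl fun a _ => h0 a]
    rw [Finset.sum_comm]
    refine Finset.sum_congr rfl fun i _ => ?_
    rw [Finset.sum_comm]
    have h1 : ∀ j, (∑ a, ((starRingEnd ℂ) (c i) * d j) * ((starRingEnd ℂ) (v i a) * v j a))
        = ((starRingEnd ℂ) (c i) * d j) * (if i = j then 1 else 0) := by
      intro j
      rw [← Finset.mul_sum, horth i j]
    rw [Finset.sum_congr rfl fun j _ => h1 j]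
    simp [Finset.sum_ite_eq]
  -- norm of each stream
  have hnorm : ∀ m, ∑ a, (starRingEnd ℂ) (w m a) * w m a = (S.trace.re : ℂ) := by
    intro m
    have h0 := inner_expand (fun i => (Real.sqrt (lam i) : ℂ) * e m (σ i))
      (fun i => (Real.sqrt (lam i) : ℂ) * e m (σ i))
    rw [hw]
    rw [h0, htrre]
    push_cast
    refine Finset.sum_congr rfl fun i _ => ?_
    rw [_root_.map_mul, Complex.conj_ofReal]
    have h1 : (Real.sqrt (lam i) : ℂ) * (starRingEnd ℂ) (e m (σ i))
        * ((Real.sqrt (lam i) : ℂ) * e m (σ i))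
        = ((Real.sqrt (lam i) : ℂ) * (Real.sqrt (lam i) : ℂ))
          * ((starRingEnd ℂ) (e m (σ i)) * e m (σ i)) := by ring
    rw [h1, hconj_e, mul_one, ← Complex.ofReal_mul, Real.mul_self_sqrt (hlam0 i)]
  -- scalar collapse lemma
  have hscal : ∀ i j : Fin n,
      (Real.sqrt (lam i) : ℂ) * (Real.sqrt (lam j) : ℂ)
        * (if σ i = σ j then (M:ℂ) else 0)
      = if i = j then (M:ℂ) * (lam i : ℂ) else 0 := by
    intro i j
    by_cases hij : i = j
    · subst hij
      rw [if_pos rfl, if_pos rfl, ← Complex.ofReal_mul, Real.mul_self_sqrt (hlam0 i)]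
      ring
    · rw [if_neg hij]
      by_cases hi : lam i = 0
      · simp [hi]
      by_cases hj : lam j = 0
      · simp [hj]
      rw [if_neg (fun h => hij (hσ i j hi hj h)), mul_zero]
  -- outer product sum
  have houter : ∀ a b, ∑ m : Fin M, w m a * (starRingEnd ℂ) (w m b) = (M:ℂ) * S a b := by
    intro a b
    have hexp : ∀ m : Fin M, w m a * (starRingEnd ℂ) (w m b)
        = ∑ i, ∑ j, ((Real.sqrt (lam i) : ℂ) * (Real.sqrt (lam j) : ℂ)
            * (e m (σ i) * (starRingEnd ℂ) (e m (σ j))))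
            * (v i a * (starRingEnd ℂ) (v j b)) := by
      intro m
      rw [hw]
      simp only [map_sum, Finset.sum_mul_sum, _root_.map_mul, Complex.conj_ofReal]
      refine Finset.sum_congr rfl fun i _ => Finset.sum_congr rfl fun j _ => ?_
      ring
    rw [Finset.sum_congr rfl fun m _ => hexp m]
    rw [Finset.sum_comm]
    have h2 : ∀ i, ∑ m : Fin M, ∑ j, ((Real.sqrt (lam i) : ℂ) * (Real.sqrt (lam j) : ℂ)
            * (e m (σ i) * (starRingEnd ℂ) (e m (σ j))))
            * (v i a * (starRingEnd ℂ) (v j b))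
        = (M:ℂ) * ((lam i : ℂ) * (v i a * (starRingEnd ℂ) (v i b))) := by
      intro i
      rw [Finset.sum_comm]
      have hcol : ∀ j, ∑ m : Fin M, ((Real.sqrt (lam i) : ℂ) * (Real.sqrt (lam j) : ℂ)
            * (e m (σ i) * (starRingEnd ℂ) (e m (σ j))))
            * (v i a * (starRingEnd ℂ) (v j b))
          = (if i = j then (M:ℂ) * (lam i : ℂ) else 0) * (v i a * (starRingEnd ℂ) (v j b)) := by
        intro j
        rw [← hscal i j, ← key (σ i) (σ j)]
        rw [Finset.mul_sum, Finset.sum_mul]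
      rw [Finset.sum_congr rfl fun j _ => hcol j]
      simp only [ite_mul, zero_mul, Finset.sum_ite_eq, Finset.mem_univ, if_true]
      ring
    rw [Finset.sum_congr rfl fun i _ => h2 i]
    rw [← Finset.mul_sum, ← hs a b]
  -- finally, normalize
  set c : ℝ := Real.sqrt S.trace.re with hc
  have hc0 : (0:ℝ) < c := Real.sqrt_pos.mpr htr
  have hcsq : (c:ℂ) * (c:ℂ) = (S.trace.re : ℂ) := by
    rw [← Complex.ofReal_mul, hc, Real.mul_self_sqrt htr.le]
  have hcC : (c:ℂ) ≠ 0 := by exact_mod_cast hc0.ne'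
  have htrC : ((S.trace.re : ℝ):ℂ) ≠ 0 := by exact_mod_cast htr.ne'
  refine ⟨fun m => ((c:ℂ))⁻¹ • w m, ?_, ?_⟩
  · intro m
    have h3 : star ((((c:ℂ))⁻¹) • w m) ⬝ᵥ (((c:ℂ))⁻¹ • w m)
        = (starRingEnd ℂ) (((c:ℂ))⁻¹) * ((c:ℂ))⁻¹ * ∑ a, (starRingEnd ℂ) (w m a) * w m a := by
      simp only [dotProduct, Pi.smul_apply, Pi.star_apply, smul_eq_mul, star_mul',
        RCLike.star_def, Finset.mul_sum]
      refine Finset.sum_congr rfl fun a _ => ?_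
      ring
    rw [h3, hnorm m, map_inv₀, Complex.conj_ofReal]
    rw [← mul_inv, hcsq]
    exact inv_mul_cancel₀ htrC
  · ext a b
    simp only [Matrix.sum_apply, Matrix.smul_apply, Matrix.vecMulVec_apply, Pi.smul_apply,
      Pi.star_apply, smul_eq_mul, RCLike.star_def]
    have hterm : ∀ m : Fin M, (S.trace.re / (M : ℝ)) •
        (((c:ℂ))⁻¹ * w m a * (starRingEnd ℂ) (((c:ℂ))⁻¹ * w m b))
        = ((M:ℂ))⁻¹ * (w m a * (starRingEnd ℂ) (w m b)) := by
      intro m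
      rw [_root_.map_mul, map_inv₀, Complex.conj_ofReal]
      rw [Complex.real_smul]
      push_cast
      have h4 : ((c:ℂ))⁻¹ * ((c:ℂ))⁻¹ = ((S.trace.re:ℂ))⁻¹ := by
        rw [← mul_inv, hcsq]
      calc ((S.trace.re:ℂ))/(M:ℂ) * (((c:ℂ))⁻¹ * w m a * (((c:ℂ))⁻¹ * (starRingEnd ℂ) (w m b)))
          = ((S.trace.re:ℂ) * (((c:ℂ))⁻¹ * ((c:ℂ))⁻¹)) * (((M:ℂ))⁻¹ * (w m a * (starRingEnd ℂ) (w m b))) := by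
            rw [div_eq_mul_inv]; ring
        _ = ((M:ℂ))⁻¹ * (w m a * (starRingEnd ℂ) (w m b)) := by
            rw [h4, mul_inv_cancel₀ htrC, one_mul]
    rw [Finset.sum_congr rfl fun m _ => hterm m]
    rw [← Finset.mul_sum, houter a b, ← mul_assoc, inv_mul_cancel₀ hMC, one_mul]
end

section
/- Let I_l^0 > 0 be target rates and suppose Σ̃_{1:L} is a family of positive semidefinite input covariance matrices that solves the sum power minimization problem SPMP, i.e., I_l(Σ̃_{1:L}, Φ) ≥ I_l^0 for all l, and ∑_l Tr(Σ̃_l) ≤ ∑_l Tr(Σ_l) for every family of positive semidefinite Σ_{1:L} with I_l(Σ_{1:L}, Φ) ≥ I_l^0 for all l. Then all rate constraints are tight at the optimum: I_l(Σ̃_{1:L}, Φ) = I_l^0 for every l. -/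
open Matrix BigOperators
open scoped ComplexOrder

/-- Interference-plus-noise covariance `Ω_l = I + ∑ₖ Φ_{l,k} H_{l,k} Σ_k H_{l,k}ᴴ`
of link `l` in a B-MAC network. -/
noncomputable def interfCov {L : ℕ} (nT nR : Fin L → ℕ)
    (H : ∀ l k : Fin L, Matrix (Fin (nR l)) (Fin (nT k)) ℂ)
    (Φ : Fin L → Fin L → ℝ)
    (S : ∀ l : Fin L, Matrix (Fin (nT l)) (Fin (nT l)) ℂ) (l : Fin L) :
    Matrix (Fin (nR l)) (Fin (nR l)) ℂ :=
  1 + ∑ k : Fin L, (Φ l k : ℂ) • (H l k * S k * (H l k)ᴴ)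

/-- Achievable rate `I_l(Σ_{1:L}, Φ) = log det(I + H_{l,l} Σ_l H_{l,l}ᴴ Ω_l⁻¹)` of link `l`. -/
noncomputable def linkRate {L : ℕ} (nT nR : Fin L → ℕ)
    (H : ∀ l k : Fin L, Matrix (Fin (nR l)) (Fin (nT k)) ℂ)
    (Φ : Fin L → Fin L → ℝ)
    (S : ∀ l : Fin L, Matrix (Fin (nT l)) (Fin (nT l)) ℂ) (l : Fin L) : ℝ :=
  Real.log ((1 + H l l * S l * (H l l)ᴴ * (interfCov nT nR H Φ S l)⁻¹).det.re)

open Filter Set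
open scoped Topology

variable {n : Type*} [Fintype n] [DecidableEq n]

/-- smul of psd by nonneg real is psd -/
lemma psd_smul_psd {M : Matrix n n ℂ} (hM : M.PosSemidef) {c : ℝ} (hc : 0 ≤ c) :
    ((c : ℂ) • M).PosSemidef := by
  constructor
  · unfold Matrix.IsHermitian
    rw [conjTranspose_smul, hM.1]
    congr 1
    simp
  · intro x
    exact (hM.smul (show (0:ℂ) ≤ (c:ℂ) by exact_mod_cast hc)).2 x

/-- determinant of 1 + psd is a real number ≥ 1 -/
lemma det_one_add_psd {M : Matrix n n ℂ} (hM : M.PosSemidef) :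
    ∃ r : ℝ, 1 ≤ r ∧ (1 + M).det = (r : ℂ) := by
  have hH := hM.1
  refine ⟨∏ i, (1 + hH.eigenvalues i), ?_, ?_⟩
  · calc (1:ℝ) = ∏ _i : n, 1 := by simp
      _ ≤ ∏ i, (1 + hH.eigenvalues i) := Finset.prod_le_prod (fun i _ => zero_le_one)
          (fun i _ => by linarith [hM.eigenvalues_nonneg i])
  set U : Matrix n n ℂ := (hH.eigenvectorUnitary : Matrix n n ℂ) with hUdef
  have hU : U * star U = 1 := Matrix.mem_unitaryGroup_iff.mp hH.eigenvectorUnitary.2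
  have h1 : 1 + M = U * (1 + Matrix.diagonal (RCLike.ofReal ∘ hH.eigenvalues)) * star U := by
    rw [mul_add, add_mul, mul_one, hU]
    congr 1
    exact hH.spectral_theorem
  rw [h1, det_mul_right_comm, hU, one_mul]
  have : (1 : Matrix n n ℂ) + Matrix.diagonal (RCLike.ofReal ∘ hH.eigenvalues)
      = diagonal (fun i => 1 + (hH.eigenvalues i : ℂ)) := by
    rw [← diagonal_one, diagonal_add]
    rfl
  rw [this, det_diagonal]
  push_cast
  rfl

lemma psd_exists_sqrt {M : Matrix n n ℂ} (hM : M.PosSemidef) :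
    ∃ s : Matrix n n ℂ, s.PosSemidef ∧ sᴴ = s ∧ s * s = M :=
  open scoped MatrixOrder in
  ⟨CFC.sqrt M, (CFC.sqrt_nonneg M).posSemidef, (CFC.sqrt_nonneg M).posSemidef.1,
    CFC.sqrt_mul_sqrt_self M hM.nonneg⟩

lemma one_add_psd_posDef {M : Matrix n n ℂ} (hM : M.PosSemidef) : (1 + M).PosDef :=
  Matrix.PosDef.one.add_posSemidef hM

lemma one_add_psd_det_isUnit {M : Matrix n n ℂ} (hM : M.PosSemidef) : IsUnit (1 + M).det :=
  (one_add_psd_posDef hM).det_pos.ne'.isUnit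

/-- Lemma C: determinant (real part) is monotone when adding a psd matrix to `1 + X`. -/
lemma det_re_one_add_le {X D : Matrix n n ℂ} (hX : X.PosSemidef) (hD : D.PosSemidef) :
    (1 + X).det.re ≤ (1 + (X + D)).det.re := by
  obtain ⟨r, hr, hrX⟩ := det_one_add_psd hX
  have hT : (1 + X).PosDef := one_add_psd_posDef hX
  have hdetT : IsUnit (1 + X).det := one_add_psd_det_isUnit hX
  obtain ⟨d, hdpsd, hdH, hdd⟩ := psd_exists_sqrt hD
  have hK : (d * (1 + X)⁻¹ * d).PosSemidef := by
    have := hT.inv.posSemidef.conjTranspose_mul_mul_same d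
    rwa [hdH] at this
  obtain ⟨r3, hr3, hKdet⟩ := det_one_add_psd hK
  have hsplit : 1 + (X + D) = (1 + X) * (1 + (1 + X)⁻¹ * D) := by
    rw [mul_add, mul_one, ← Matrix.mul_assoc, mul_nonsing_inv _ hdetT, one_mul, add_assoc]
  have hdet2 : (1 + (1 + X)⁻¹ * D).det = (1 + d * (1 + X)⁻¹ * d).det := by
    rw [← hdd, ← Matrix.mul_assoc, det_one_add_mul_comm, Matrix.mul_assoc]
  have : (1 + (X + D)).det = ((r * r3 : ℝ) : ℂ) := by
    rw [hsplit, det_mul, hdet2, hrX, hKdet]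
    push_cast
    ring
  rw [this, hrX]
  simp only [Complex.ofReal_re]
  nlinarith

/-- Lemma D: matrix inverse is antitone: `Q⁻¹ - (Q + N)⁻¹` is psd. -/
lemma inv_sub_inv_psd {Q N : Matrix n n ℂ} (hQ : Q.PosDef) (hN : N.PosSemidef) :
    (Q⁻¹ - (Q + N)⁻¹).PosSemidef := by
  have hQinv : (Q⁻¹).PosDef := hQ.inv
  obtain ⟨q, hqpsd, hqH, hqq⟩ := psd_exists_sqrt hQinv.posSemidef
  have hdetQ : IsUnit Q.det := hQ.det_pos.ne'.isUnit
  have hdetq : IsUnit q.det := by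
    refine isUnit_iff_ne_zero.mpr fun h => hQinv.det_pos.ne'.isUnit.ne_zero ?_
    rw [← hqq, det_mul, h, zero_mul]
  have hq_inv_q : q⁻¹ * q = 1 := nonsing_inv_mul q hdetq
  have hq_q_inv : q * q⁻¹ = 1 := mul_nonsing_inv q hdetq
  set W := q * N * q with hWdef
  have hW : W.PosSemidef := by
    have := hN.conjTranspose_mul_mul_same q
    rwa [hqH] at this
  have hT : (1 + W).PosDef := one_add_psd_posDef hW
  have hdetT : IsUnit (1 + W).det := one_add_psd_det_isUnit hW
  have hQeq : q⁻¹ * q⁻¹ = Q := by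
    have h := congrArg Inv.inv hqq
    rw [Matrix.mul_inv_rev, nonsing_inv_nonsing_inv Q hdetQ] at h
    exact h
  have hP : Q + N = q⁻¹ * (1 + W) * q⁻¹ := by
    rw [mul_add, add_mul, mul_one, hQeq]
    congr 1
    have h1 : q⁻¹ * (q * N * q) * q⁻¹ = (q⁻¹ * q) * (N * (q * q⁻¹)) := by
      simp only [Matrix.mul_assoc]
    rw [hWdef, h1, hq_inv_q, hq_q_inv, one_mul, mul_one]
  have hPinv : (Q + N)⁻¹ = q * (1 + W)⁻¹ * q := by
    rw [hP, Matrix.mul_inv_rev, Matrix.mul_inv_rev]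
    simp only [nonsing_inv_nonsing_inv q hdetq, Matrix.mul_assoc]
  -- key : 1 - (1+W)⁻¹ is psd
  obtain ⟨w, hwpsd, hwH, hww⟩ := psd_exists_sqrt hW
  have hTinvH : ((1 + W)⁻¹)ᴴ = (1 + W)⁻¹ := hT.inv.isHermitian
  have h1 : (1 + W)⁻¹ * (1 + W) = 1 := nonsing_inv_mul _ hdetT
  have h2 : (1 + W) * (1 + W)⁻¹ = 1 := mul_nonsing_inv _ hdetT
  have hsub : 1 - (1 + W)⁻¹ = (1 + W)⁻¹ * W := by
    have := h1
    rw [mul_add, mul_one] at this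
    linear_combination (norm := (abel1)) this.symm
  have key : 1 - (1 + W)⁻¹ = (1 + W)⁻¹ * (w * (1 + W) * w) * (1 + W)⁻¹ := by
    have h3 : w * (1 + W) * w = W * (1 + W) := by
      rw [mul_add, mul_one, add_mul, hww, mul_add, mul_one]
      congr 1
      rw [← hww]
      simp only [Matrix.mul_assoc]
    rw [hsub, h3]
    calc (1 + W)⁻¹ * W = (1 + W)⁻¹ * W * 1 := by rw [mul_one]
      _ = (1 + W)⁻¹ * W * ((1 + W) * (1 + W)⁻¹) := by rw [h2]
      _ = (1 + W)⁻¹ * (W * (1 + W)) * (1 + W)⁻¹ := by simp only [Matrix.mul_assoc]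
  have hkey_psd : ((1 : Matrix n n ℂ) - (1 + W)⁻¹).PosSemidef := by
    rw [key]
    have hmid : (w * (1 + W) * w).PosSemidef := by
      have := hT.posSemidef.conjTranspose_mul_mul_same w
      rwa [hwH] at this
    have := hmid.conjTranspose_mul_mul_same ((1 + W)⁻¹)
    rwa [hTinvH] at this
  have final : Q⁻¹ - (Q + N)⁻¹ = q * (1 - (1 + W)⁻¹) * q := by
    rw [hPinv, mul_sub, sub_mul, mul_one, hqq]
  rw [final]
  have := hkey_psd.conjTranspose_mul_mul_same q
  rwa [hqH] at this

/-- rewrite `det (1 + A (1+X)⁻¹)` using a square root `s` of `A`. -/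
lemma det_one_add_mul_inv_eq {A X s : Matrix n n ℂ} (hss : s * s = A) :
    (1 + A * (1 + X)⁻¹).det = (1 + s * (1 + X)⁻¹ * s).det := by
  rw [← hss, Matrix.mul_assoc, det_one_add_mul_comm, Matrix.mul_assoc]

/-- Lemma F: `det (1 + A (1+X)⁻¹)` is a real number ≥ 1 for psd `A`, `X`. -/
lemma det_one_add_mul_inv_real {A X : Matrix n n ℂ} (hA : A.PosSemidef) (hX : X.PosSemidef) :
    ∃ r : ℝ, 1 ≤ r ∧ (1 + A * (1 + X)⁻¹).det = (r : ℂ) := by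
  obtain ⟨s, hspsd, hsH, hss⟩ := psd_exists_sqrt hA
  have hK : (s * (1 + X)⁻¹ * s).PosSemidef := by
    have := (one_add_psd_posDef hX).inv.posSemidef.conjTranspose_mul_mul_same s
    rwa [hsH] at this
  obtain ⟨r, hr, hrdet⟩ := det_one_add_psd hK
  exact ⟨r, hr, by rw [det_one_add_mul_inv_eq hss, hrdet]⟩

/-- Lemma E: increasing the interference `X` by a psd `N` decreases the rate determinant. -/
lemma det_re_one_add_mul_inv_mono {A X N : Matrix n n ℂ}
    (hA : A.PosSemidef) (hX : X.PosSemidef) (hN : N.PosSemidef) :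
    (1 + A * (1 + (X + N))⁻¹).det.re ≤ (1 + A * (1 + X)⁻¹).det.re := by
  obtain ⟨s, hspsd, hsH, hss⟩ := psd_exists_sqrt hA
  have hQ : (1 + X).PosDef := one_add_psd_posDef hX
  have hPX : (1 : Matrix n n ℂ) + (X + N) = (1 + X) + N := by rw [add_assoc]
  have hY : (s * (1 + (X + N))⁻¹ * s).PosSemidef := by
    have hP : (1 + (X + N)).PosDef := one_add_psd_posDef (hX.add hN)
    have := hP.inv.posSemidef.conjTranspose_mul_mul_same s
    rwa [hsH] at this
  have hD' : (s * (1 + X)⁻¹ * s - s * (1 + (X + N))⁻¹ * s).PosSemidef := by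
    have hdiff : ((1 + X)⁻¹ - ((1 + X) + N)⁻¹).PosSemidef := inv_sub_inv_psd hQ hN
    have := hdiff.conjTranspose_mul_mul_same s
    rw [hsH] at this
    have heq : s * ((1 + X)⁻¹ - ((1 + X) + N)⁻¹) * s
        = s * (1 + X)⁻¹ * s - s * (1 + (X + N))⁻¹ * s := by
      rw [mul_sub, sub_mul, hPX]
    rwa [heq] at this
  have hstep := det_re_one_add_le hY hD'
  rw [det_one_add_mul_inv_eq (X := X + N) hss, det_one_add_mul_inv_eq (X := X) hss]
  have hsum : s * (1 + (X + N))⁻¹ * s + (s * (1 + X)⁻¹ * s - s * (1 + (X + N))⁻¹ * s)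
      = s * (1 + X)⁻¹ * s := by abel
  rwa [hsum] at hstep

lemma psd_finset_sum {ι : Type*} (s : Finset ι) (f : ι → Matrix n n ℂ)
    (h : ∀ i ∈ s, (f i).PosSemidef) : (∑ i ∈ s, f i).PosSemidef := by
  classical
  induction s using Finset.induction_on with
  | empty => simpa using (Matrix.PosSemidef.zero (n := n) (R := ℂ))
  | @insert a s ha ih =>
    rw [Finset.sum_insert ha]
    exact (h a (Finset.mem_insert_self a s)).add
      (ih fun i hi => h i (Finset.mem_insert_of_mem hi))

/-- The interference part of `interfCov`. -/
noncomputable def Xmat {L : ℕ} (nT nR : Fin L → ℕ)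
    (H : ∀ l k : Fin L, Matrix (Fin (nR l)) (Fin (nT k)) ℂ)
    (Φ : Fin L → Fin L → ℝ)
    (S : ∀ l : Fin L, Matrix (Fin (nT l)) (Fin (nT l)) ℂ) (l : Fin L) :
    Matrix (Fin (nR l)) (Fin (nR l)) ℂ :=
  ∑ k : Fin L, (Φ l k : ℂ) • (H l k * S k * (H l k)ᴴ)

lemma interfCov_eq_one_add {L : ℕ} (nT nR : Fin L → ℕ)
    (H : ∀ l k : Fin L, Matrix (Fin (nR l)) (Fin (nT k)) ℂ)
    (Φ : Fin L → Fin L → ℝ)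
    (S : ∀ l : Fin L, Matrix (Fin (nT l)) (Fin (nT l)) ℂ) (l : Fin L) :
    interfCov nT nR H Φ S l = 1 + Xmat nT nR H Φ S l := rfl

lemma linkRate_eq {L : ℕ} (nT nR : Fin L → ℕ)
    (H : ∀ l k : Fin L, Matrix (Fin (nR l)) (Fin (nT k)) ℂ)
    (Φ : Fin L → Fin L → ℝ)
    (S : ∀ l : Fin L, Matrix (Fin (nT l)) (Fin (nT l)) ℂ) (l : Fin L) :
    linkRate nT nR H Φ S l
      = Real.log ((1 + H l l * S l * (H l l)ᴴ * (1 + Xmat nT nR H Φ S l)⁻¹).det.re) := rfl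

lemma Xmat_psd {L : ℕ} (nT nR : Fin L → ℕ)
    (H : ∀ l k : Fin L, Matrix (Fin (nR l)) (Fin (nT k)) ℂ)
    (Φ : Fin L → Fin L → ℝ) (hΦnn : ∀ l k, 0 ≤ Φ l k)
    (S : ∀ l : Fin L, Matrix (Fin (nT l)) (Fin (nT l)) ℂ)
    (hS : ∀ l, (S l).PosSemidef) (l : Fin L) :
    (Xmat nT nR H Φ S l).PosSemidef := by
  refine psd_finset_sum _ _ fun k _ => ?_
  exact psd_smul_psd ((hS k).mul_mul_conjTranspose_same (H l k)) (hΦnn l k)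
/-- At any optimum of the sum power minimization problem SPMP (minimizing the
total transmit power subject to the rate constraints `I_l ≥ I_l⁰ > 0`), all rate constraints
are tight: `I_l(Σ̃_{1:L}, Φ) = I_l⁰` for every link `l`. -/
theorem spmp_constraints_tight {L : ℕ} (hL : 0 < L) (nT nR : Fin L → ℕ)
    (H : ∀ l k : Fin L, Matrix (Fin (nR l)) (Fin (nT k)) ℂ)
    (Φ : Fin L → Fin L → ℝ)
    (hΦ01 : ∀ l k, Φ l k = 0 ∨ Φ l k = 1) (hΦdiag : ∀ l, Φ l l = 0)
    (I0 : Fin L → ℝ) (hI0 : ∀ l, 0 < I0 l)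
    (St : ∀ l : Fin L, Matrix (Fin (nT l)) (Fin (nT l)) ℂ)
    (hpsd : ∀ l, (St l).PosSemidef)
    (hfeas : ∀ l, I0 l ≤ linkRate nT nR H Φ St l)
    (hopt : ∀ S : ∀ l : Fin L, Matrix (Fin (nT l)) (Fin (nT l)) ℂ,
      (∀ l, (S l).PosSemidef) → (∀ l, I0 l ≤ linkRate nT nR H Φ S l) →
      (∑ l : Fin L, (St l).trace).re ≤ (∑ l : Fin L, (S l).trace).re) :
    ∀ l : Fin L, linkRate nT nR H Φ St l = I0 l := by
  classical
  have hΦnn : ∀ l k, 0 ≤ Φ l k := fun l k => by rcases hΦ01 l k with h | h <;> rw [h] <;> norm_num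
  intro l₀
  by_contra hne
  have hlt : I0 l₀ < linkRate nT nR H Φ St l₀ := lt_of_le_of_ne (hfeas l₀) (Ne.symm hne)
  -- the scaled family
  set F : ℝ → (∀ l : Fin L, Matrix (Fin (nT l)) (Fin (nT l)) ℂ) :=
    fun t => Function.update St l₀ ((t : ℂ) • St l₀) with hF
  -- trace of St l₀ is positive
  have htr0 : 0 < ((St l₀).trace).re := by
    obtain ⟨B, hB⟩ : ∃ B : Matrix (Fin (nT l₀)) (Fin (nT l₀)) ℂ, St l₀ = Bᴴ * B := by
      obtain ⟨s, -, hsH, hss⟩ := psd_exists_sqrt (hpsd l₀); exact ⟨s, by rw [hsH, hss]⟩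
    have h1 : (St l₀).trace = ∑ j, ∑ i, (starRingEnd ℂ) (B i j) * B i j := by
      rw [hB]
      simp [Matrix.trace, Matrix.diag, Matrix.mul_apply, Matrix.conjTranspose_apply]
    have h2 : ((St l₀).trace).re = ∑ j, ∑ i, ((B i j).re ^ 2 + (B i j).im ^ 2) := by
      rw [h1, Complex.re_sum]
      refine Finset.sum_congr rfl fun j _ => ?_
      rw [Complex.re_sum]
      refine Finset.sum_congr rfl fun i _ => ?_
      simp [Complex.mul_re]
      ring
    have hnn : ∀ j ∈ Finset.univ (α := Fin (nT l₀)),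
        0 ≤ ∑ i, ((B i j).re ^ 2 + (B i j).im ^ 2) := fun j _ =>
      Finset.sum_nonneg fun i _ => by positivity
    rcases lt_or_eq_of_le (Finset.sum_nonneg hnn) with hpos | hzero
    · rw [h2]; exact hpos
    · exfalso
      have hB0 : B = 0 := by
        ext i j
        have hj := (Finset.sum_eq_zero_iff_of_nonneg hnn).mp hzero.symm j (Finset.mem_univ j)
        have hi := (Finset.sum_eq_zero_iff_of_nonneg
          (fun i _ => by positivity)).mp hj i (Finset.mem_univ i)
        have hre : (B i j).re = 0 := by nlinarith [sq_nonneg (B i j).re, sq_nonneg (B i j).im]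
        have him : (B i j).im = 0 := by nlinarith [sq_nonneg (B i j).re, sq_nonneg (B i j).im]
        simp [Complex.ext_iff, hre, him]
      have hSt0 : St l₀ = 0 := by rw [hB, hB0]; simp
      have hrate0 : linkRate nT nR H Φ St l₀ = 0 := by
        unfold linkRate
        rw [hSt0]
        simp
      linarith [hfeas l₀, hI0 l₀]
  -- the interference covariance at l₀ is unaffected by scaling Σ_{l₀}
  have hΩ : ∀ t : ℝ, interfCov nT nR H Φ (F t) l₀ = interfCov nT nR H Φ St l₀ := by
    intro t
    unfold interfCov
    congr 1
    refine Finset.sum_congr rfl fun j _ => ?_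
    by_cases hj : j = l₀
    · rw [hj, hΦdiag l₀]; simp
    · rw [hF]; simp only [Function.update_of_ne hj]
  set K : Matrix (Fin (nR l₀)) (Fin (nR l₀)) ℂ :=
    H l₀ l₀ * St l₀ * (H l₀ l₀)ᴴ * (interfCov nT nR H Φ St l₀)⁻¹ with hK
  have hfK : ∀ t : ℝ, linkRate nT nR H Φ (F t) l₀ = Real.log ((1 + (t : ℂ) • K).det.re) := by
    intro t
    unfold linkRate
    rw [hΩ t, hF]
    simp only [Function.update_self]
    have hmm : H l₀ l₀ * ((t : ℂ) • St l₀) * (H l₀ l₀)ᴴ * (interfCov nT nR H Φ St l₀)⁻¹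
        = (t : ℂ) • K := by
      rw [hK, Matrix.mul_smul, Matrix.smul_mul, Matrix.smul_mul]
    rw [hmm]
  have hr1 : linkRate nT nR H Φ St l₀ = Real.log ((1 + ((1 : ℝ) : ℂ) • K).det.re) := by
    have : F 1 = St := by
      funext j
      by_cases hj : j = l₀
      · subst hj; rw [hF]; simp
      · rw [hF]; simp [Function.update_of_ne hj]
    rw [← this, hfK 1]
  -- continuity in t and choice of t < 1
  have hgc : Continuous fun t : ℝ => ((1 + (t : ℂ) • K).det.re) := by
    have h1 : Continuous fun t : ℝ => (1 + (t : ℂ) • K) :=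
      continuous_const.add (Complex.continuous_ofReal.smul continuous_const)
    exact Complex.continuous_re.comp h1.matrix_det
  have hg1 : ((1 + ((1 : ℝ) : ℂ) • K).det.re) ≠ 0 := by
    intro h
    rw [hr1, h, Real.log_zero] at hlt
    linarith [hI0 l₀]
  have hcont : ContinuousAt (fun t : ℝ => Real.log ((1 + (t : ℂ) • K).det.re)) 1 :=
    hgc.continuousAt.log hg1
  have hflt : I0 l₀ < (fun t : ℝ => Real.log ((1 + (t : ℂ) • K).det.re)) 1 := by
    rw [hr1] at hlt
    exact hlt
  have hmem : (fun t : ℝ => Real.log ((1 + (t : ℂ) • K).det.re)) ⁻¹' (Set.Ioi (I0 l₀))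
      ∈ 𝓝 (1 : ℝ) := hcont (Ioi_mem_nhds hflt)
  have hIoo : Set.Ioo (0 : ℝ) 1 ∈ 𝓝[<] (1 : ℝ) :=
    Ioo_mem_nhdsLT_of_mem (by constructor <;> norm_num)
  obtain ⟨t, htmem⟩ := Filter.nonempty_of_mem (Filter.inter_mem (nhdsWithin_le_nhds hmem) hIoo)
  have htf : I0 l₀ < Real.log ((1 + (t : ℂ) • K).det.re) := htmem.1
  have ht0 : (0:ℝ) < t := htmem.2.1
  have ht1 : t < 1 := htmem.2.2
  -- the scaled family is feasible
  have hSpsd : ∀ k, ((F t) k).PosSemidef := by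
    intro k
    by_cases hk : k = l₀
    · rw [hk, hF]; simp only [Function.update_self]
      exact psd_smul_psd (hpsd l₀) ht0.le
    · rw [hF]; simp only [Function.update_of_ne hk]; exact hpsd k
  have hSfeas : ∀ k, I0 k ≤ linkRate nT nR H Φ (F t) k := by
    intro k
    by_cases hk : k = l₀
    · rw [hk, hfK t]
      exact le_of_lt htf
    · refine le_trans (hfeas k) ?_
      set N : Matrix (Fin (nR k)) (Fin (nR k)) ℂ :=
        ((Φ k l₀ * (1 - t) : ℝ) : ℂ) • (H k l₀ * St l₀ * (H k l₀)ᴴ) with hN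
      have hNpsd : N.PosSemidef :=
        psd_smul_psd ((hpsd l₀).mul_mul_conjTranspose_same (H k l₀))
          (mul_nonneg (hΦnn k l₀) (by linarith))
      have hXeq : Xmat nT nR H Φ St k = Xmat nT nR H Φ (F t) k + N := by
        unfold Xmat
        have hterm : ∀ j : Fin L, (Φ k j : ℂ) • (H k j * St j * (H k j)ᴴ)
            = (Φ k j : ℂ) • (H k j * (F t j) * (H k j)ᴴ) + (if j = l₀ then N else 0) := by
          intro j
          by_cases hj : j = l₀
          · rw [hj, if_pos rfl, hF]
            simp only [Function.update_self]
            rw [hN, Matrix.mul_smul, Matrix.smul_mul, smul_smul]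
            rw [← add_smul]
            congr 1
            push_cast
            ring
          · rw [if_neg hj, hF]
            simp only [Function.update_of_ne hj, add_zero]
        rw [Finset.sum_congr rfl fun j _ => hterm j, Finset.sum_add_distrib,
          Finset.sum_ite_eq' Finset.univ l₀ (fun _ => N)]
        simp
      have hXpsdF : (Xmat nT nR H Φ (F t) k).PosSemidef := Xmat_psd nT nR H Φ hΦnn (F t) hSpsd k
      have hApsd : (H k k * St k * (H k k)ᴴ).PosSemidef :=
        (hpsd k).mul_mul_conjTranspose_same (H k k)
      have hmono := det_re_one_add_mul_inv_mono hApsd hXpsdF hNpsd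
      rw [linkRate_eq, linkRate_eq, hXeq]
      have hFk : F t k = St k := by rw [hF]; simp [Function.update_of_ne hk]
      rw [hFk]
      refine Real.log_le_log ?_ hmono
      obtain ⟨r, hr, hrd⟩ := det_one_add_mul_inv_real hApsd (hXpsdF.add hNpsd)
      rw [hrd]
      simp only [Complex.ofReal_re]
      linarith
  -- optimality gives a contradiction with the strictly smaller power
  have hkey := hopt (F t) hSpsd hSfeas
  have hre : ∀ (G : ∀ l : Fin L, Matrix (Fin (nT l)) (Fin (nT l)) ℂ),
      (∑ l : Fin L, (G l).trace).re = ∑ l : Fin L, ((G l).trace).re := fun G =>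
    Complex.re_sum Finset.univ (fun l => (G l).trace)
  rw [hre, hre] at hkey
  have hFtr : ∀ k, ((F t k).trace).re
      = ((St k).trace).re + (if k = l₀ then (t - 1) * ((St l₀).trace).re else 0) := by
    intro k
    by_cases hk : k = l₀
    · rw [hk, if_pos rfl, hF]
      simp only [Function.update_self]
      rw [Matrix.trace_smul, smul_eq_mul, Complex.re_ofReal_mul]
      ring
    · rw [if_neg hk, hF]
      simp [Function.update_of_ne hk]
  rw [Finset.sum_congr rfl fun k _ => hFtr k, Finset.sum_add_distrib,
    Finset.sum_ite_eq' Finset.univ l₀ (fun _ => (t - 1) * ((St l₀).trace).re)] at hkey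
  simp only [Finset.mem_univ, if_true] at hkey
  nlinarith
end

section
/- Let I_l^0 > 0 be target rates and P_T > 0. Suppose Σ̃_{1:L} is a family of positive semidefinite input covariance matrices with ∑_l Tr(Σ̃_l) ≤ P_T that solves the feasibility optimization problem FOP, i.e., min_{1≤l≤L} I_l(Σ̃_{1:L}, Φ)/I_l^0 ≥ min_{1≤l≤L} I_l(Σ_{1:L}, Φ)/I_l^0 for every positive semidefinite Σ_{1:L} with ∑_l Tr(Σ_l) ≤ P_T, and suppose the optimal value α := min_l I_l(Σ̃_{1:L}, Φ)/I_l^0 is strictly positive. Then the optimum uses full power: ∑_{l=1}^L Tr(Σ̃_l) = P_T. -/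
open Matrix BigOperators
open scoped ComplexOrder

section FopHelpers

open scoped MatrixOrder in
noncomputable def Matrix.PosSemidef.sqrt {m : Type*} [Fintype m] [DecidableEq m]
    {M : Matrix m m ℂ} (_hM : M.PosSemidef) : Matrix m m ℂ :=
  CFC.sqrt M

open scoped MatrixOrder in
lemma Matrix.PosSemidef.sqrt_mul_self {m : Type*} [Fintype m] [DecidableEq m]
    {M : Matrix m m ℂ} (hM : M.PosSemidef) : hM.sqrt * hM.sqrt = M :=
  CFC.sqrt_mul_sqrt_self M (Matrix.nonneg_iff_posSemidef.mpr hM)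

open scoped MatrixOrder in
lemma Matrix.PosSemidef.posSemidef_sqrt {m : Type*} [Fintype m] [DecidableEq m]
    {M : Matrix m m ℂ} (hM : M.PosSemidef) : hM.sqrt.PosSemidef :=
  Matrix.nonneg_iff_posSemidef.mp (CFC.sqrt_nonneg M)

set_option linter.unusedSectionVars false in
private lemma fop_smul_psd {m : Type*} [Fintype m] [DecidableEq m] {c : ℝ} (hc : 0 ≤ c)
    {M : Matrix m m ℂ} (hM : M.PosSemidef) : ((c : ℂ) • M).PosSemidef := by
  constructor
  · show ((c:ℂ) • M)ᴴ = _
    rw [Matrix.conjTranspose_smul, hM.1.eq]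
    congr 1
    simp [Complex.star_def, Complex.conj_ofReal]
  · intro x
    exact (hM.smul (a := (c:ℂ)) (Complex.zero_le_real.mpr hc)).2 x

set_option linter.unusedSectionVars false in
private lemma fop_smul_pd {m : Type*} [Fintype m] [DecidableEq m] {c : ℝ} (hc : 0 < c)
    {M : Matrix m m ℂ} (hM : M.PosDef) : ((c : ℂ) • M).PosDef := by
  constructor
  · show ((c:ℂ) • M)ᴴ = _
    rw [Matrix.conjTranspose_smul, hM.1.eq]
    congr 1
    simp [Complex.star_def, Complex.conj_ofReal]
  · intro x hx
    exact (hM.smul (a := (c:ℂ)) (Complex.zero_lt_real.mpr hc)).2 hx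

private lemma fop_pd_det {m : Type*} [Fintype m] [DecidableEq m] {M : Matrix m m ℂ}
    (hM : M.PosDef) : 0 < M.det.re ∧ M.det.im = 0 := by
  have := hM.det_pos
  rw [Complex.lt_def] at this
  exact ⟨by simpa using this.1, by simpa using this.2.symm⟩

set_option linter.unusedSectionVars false in
private lemma fop_trace_psd {m : Type*} [Fintype m] [DecidableEq m] {M : Matrix m m ℂ}
    (hM : M.PosSemidef) :
    0 ≤ M.trace.re ∧ M.trace.im = 0 ∧ (M ≠ 0 → 0 < M.trace.re) := by
  have hss : hM.sqrt * hM.sqrt = M := hM.sqrt_mul_self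
  have hsH : hM.sqrtᴴ = hM.sqrt := hM.posSemidef_sqrt.1.eq
  set s := hM.sqrt with hs
  have key : M.trace = ((∑ i, ∑ j, Complex.normSq (s i j) : ℝ) : ℂ) := by
    rw [← hss]
    push_cast
    rw [Matrix.trace]
    refine Finset.sum_congr rfl fun i _ => ?_
    rw [Matrix.diag_apply, Matrix.mul_apply]
    refine Finset.sum_congr rfl fun j _ => ?_
    have h1 : s j i = star (s i j) := by conv_lhs => rw [← hsH, Matrix.conjTranspose_apply]
    rw [h1, Complex.star_def, Complex.mul_conj]
  refine ⟨?_, ?_, ?_⟩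
  · rw [key, Complex.ofReal_re]
    exact Finset.sum_nonneg fun i _ => Finset.sum_nonneg fun j _ => Complex.normSq_nonneg _
  · rw [key, Complex.ofReal_im]
  · intro h0
    have hs0 : s ≠ 0 := fun h => h0 (by rw [← hss, h, Matrix.mul_zero])
    obtain ⟨i, j, hij⟩ : ∃ i j, s i j ≠ 0 := by
      by_contra hc
      push_neg at hc
      exact hs0 (Matrix.ext fun i j => hc i j)
    rw [key, Complex.ofReal_re]
    refine Finset.sum_pos' (fun i _ => Finset.sum_nonneg fun j _ => Complex.normSq_nonneg _)
      ⟨i, Finset.mem_univ i, Finset.sum_pos' (fun j _ => Complex.normSq_nonneg _)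
        ⟨j, Finset.mem_univ j, Complex.normSq_pos.mpr hij⟩⟩

private lemma fop_det_one_add_psd {m : Type*} [Fintype m] [DecidableEq m] {S : Matrix m m ℂ}
    (hS : S.PosSemidef) :
    (1 + S).det.im = 0 ∧ 1 ≤ (1 + S).det.re ∧ (S ≠ 0 → 1 < (1 + S).det.re) := by
  have hH := hS.1
  set d : m → ℝ := hH.eigenvalues with hd
  have hdnn : ∀ i, 0 ≤ d i := fun i => hS.eigenvalues_nonneg i
  set U : Matrix m m ℂ := (hH.eigenvectorUnitary : Matrix m m ℂ) with hU
  have hUU : U * star U = 1 := (Matrix.mem_unitaryGroup_iff).mp hH.eigenvectorUnitary.2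
  have hst : S = U * Matrix.diagonal (RCLike.ofReal ∘ d) * star U := hH.spectral_theorem
  have h1 : U * (1 + Matrix.diagonal (RCLike.ofReal ∘ d)) * star U = 1 + S := by
    rw [Matrix.mul_add, Matrix.mul_one, Matrix.add_mul, hUU, ← hst]
  have key : (1 + S).det = ((∏ i, (1 + d i) : ℝ) : ℂ) := by
    rw [← h1, Matrix.det_mul_right_comm, hUU, Matrix.one_mul]
    rw [← Matrix.diagonal_one, Matrix.diagonal_add, Matrix.det_diagonal]
    push_cast
    refine Finset.prod_congr rfl fun i _ => ?_
    simp [Pi.add_apply, Function.comp, RCLike.ofReal]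
  have hple : (1:ℝ) ≤ ∏ i, (1 + d i) := by
    calc (1:ℝ) = ∏ _i : m, 1 := by rw [Finset.prod_const_one]
    _ ≤ ∏ i, (1 + d i) :=
        Finset.prod_le_prod (fun i _ => zero_le_one) (fun i _ => by linarith [hdnn i])
  refine ⟨by rw [key, Complex.ofReal_im], by rw [key, Complex.ofReal_re]; exact hple, ?_⟩
  intro h0
  obtain ⟨j, hj⟩ : ∃ j, d j ≠ 0 := by
    by_contra hc
    push_neg at hc
    apply h0
    rw [hst]
    have hz : Matrix.diagonal (RCLike.ofReal ∘ d) = (0 : Matrix m m ℂ) := by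
      ext i k
      by_cases h : i = k <;> simp [Matrix.diagonal, h, hc]
    rw [hz, Matrix.mul_zero, Matrix.zero_mul]
  rw [key, Complex.ofReal_re]
  calc (1:ℝ) = ∏ _i : m, 1 := by rw [Finset.prod_const_one]
  _ < ∏ i, (1 + d i) := by
      refine Finset.prod_lt_prod (fun i _ => zero_lt_one) (fun i _ => by linarith [hdnn i]) ?_
      exact ⟨j, Finset.mem_univ j, by have := lt_of_le_of_ne (hdnn j) (Ne.symm hj); linarith⟩

private lemma fop_det_sandwich {m : Type*} [Fintype m] [DecidableEq m] {A : Matrix m m ℂ}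
    (hA : A.PosSemidef) (N : Matrix m m ℂ) :
    (1 + A * N⁻¹).det = (1 + hA.sqrt * N⁻¹ * hA.sqrt).det := by
  conv_lhs => rw [← hA.sqrt_mul_self, Matrix.mul_assoc]
  rw [Matrix.det_one_add_mul_comm, Matrix.mul_assoc]

private lemma fop_psd_sandwich {m : Type*} [Fintype m] [DecidableEq m] {A N : Matrix m m ℂ}
    (hA : A.PosSemidef) (hN : N.PosDef) : (hA.sqrt * N⁻¹ * hA.sqrt).PosSemidef := by
  have := hN.inv.posSemidef.mul_mul_conjTranspose_same hA.sqrt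
  rwa [hA.posSemidef_sqrt.1.eq] at this

private lemma fop_det_re_pos {m : Type*} [Fintype m] [DecidableEq m] {A N : Matrix m m ℂ}
    (hA : A.PosSemidef) (hN : N.PosDef) : 0 < (1 + A * N⁻¹).det.re := by
  rw [fop_det_sandwich hA N]
  exact (fop_pd_det (Matrix.PosDef.one.add_posSemidef (fop_psd_sandwich hA hN))).1

private lemma fop_det_lt_det_add {m : Type*} [Fintype m] [DecidableEq m] {P R : Matrix m m ℂ}
    (hP : P.PosSemidef) (hR : R.PosSemidef) (hR0 : R ≠ 0) :
    (1 + P).det.re < (1 + P + R).det.re := by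
  set M := 1 + P with hMdef
  have hM : M.PosDef := Matrix.PosDef.one.add_posSemidef hP
  have hMu : IsUnit M.det := hM.det_pos.ne'.isUnit
  have hMinv : (M⁻¹).PosDef := hM.inv
  have huu : hMinv.posSemidef.sqrt * hMinv.posSemidef.sqrt = M⁻¹ := hMinv.posSemidef.sqrt_mul_self
  have huH : hMinv.posSemidef.sqrtᴴ = hMinv.posSemidef.sqrt := hMinv.posSemidef.posSemidef_sqrt.1.eq
  set u := hMinv.posSemidef.sqrt with hu
  have hudet : IsUnit u.det := by
    have h2 : u.det * u.det = (M⁻¹).det := by rw [← Matrix.det_mul, huu]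
    have h3 : (M⁻¹).det ≠ 0 := hMinv.det_pos.ne'
    exact (show u.det ≠ 0 from fun h => h3 (by rw [← h2, h, mul_zero])).isUnit
  have hT : (u * R * u).PosSemidef := by
    have := hR.mul_mul_conjTranspose_same u; rwa [huH] at this
  have hT0 : u * R * u ≠ 0 := by
    intro h
    apply hR0
    have hinv : u⁻¹ * (u * R * u) * u⁻¹ = R := by
      have e : u⁻¹ * (u * R * u) * u⁻¹ = (u⁻¹ * u) * R * (u * u⁻¹) := by
        noncomm_ring
      rw [e, Matrix.nonsing_inv_mul _ hudet, Matrix.mul_nonsing_inv _ hudet, Matrix.one_mul,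
        Matrix.mul_one]
    rw [h, Matrix.mul_zero, Matrix.zero_mul] at hinv
    exact hinv.symm
  have key : (1 + P + R).det = M.det * (1 + u * R * u).det := by
    have h1 : 1 + P + R = M * (1 + M⁻¹ * R) := by
      rw [Matrix.mul_add, Matrix.mul_one, ← Matrix.mul_assoc, Matrix.mul_nonsing_inv _ hMu,
        Matrix.one_mul, hMdef]
    rw [h1, Matrix.det_mul]
    congr 1
    rw [← huu, Matrix.mul_assoc, Matrix.det_one_add_mul_comm, Matrix.mul_assoc]
  have hm' := fop_pd_det hM
  have hT' := fop_det_one_add_psd hT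
  have hre : (1 + P + R).det.re = M.det.re * (1 + u * R * u).det.re := by
    rw [key, Complex.mul_re, hm'.2, zero_mul, sub_zero]
  rw [hre]
  calc (1 + P).det.re = M.det.re * 1 := by rw [mul_one]
  _ < M.det.re * (1 + u * R * u).det.re := (mul_lt_mul_iff_right₀ hm'.1).mpr (hT'.2.2 hT0)

private lemma fop_core {m : Type*} [Fintype m] [DecidableEq m] {A B : Matrix m m ℂ}
    (hA : A.PosSemidef) (hB : B.PosSemidef) (hA0 : A ≠ 0) {β : ℝ} (hβ : 1 < β) :
    (1 + A * (1 + B)⁻¹).det.re < (1 + (β:ℂ) • A * (1 + (β:ℂ) • B)⁻¹).det.re := by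
  have hβ0 : (0:ℝ) < β := lt_trans one_pos hβ
  set c : ℝ := β⁻¹ with hcdef
  have hc0 : 0 < c := by positivity
  have hcβ : c * β = 1 := inv_mul_cancel₀ hβ0.ne'
  have hc1 : c < 1 := by nlinarith
  set N₁ : Matrix m m ℂ := 1 + B with hN₁def
  set N₂ : Matrix m m ℂ := (c:ℂ) • 1 + B with hN₂def
  have hN₁ : N₁.PosDef := Matrix.PosDef.one.add_posSemidef hB
  have hN₂ : N₂.PosDef := (fop_smul_pd hc0 Matrix.PosDef.one).add_posSemidef hB
  have hN₁u : IsUnit N₁.det := hN₁.det_pos.ne'.isUnit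
  have hN₂u : IsUnit N₂.det := hN₂.det_pos.ne'.isUnit
  have hβc : (β:ℂ) * (c:ℂ) = 1 := by
    rw [← Complex.ofReal_mul, mul_comm, hcβ, Complex.ofReal_one]
  have h1 : (1 : Matrix m m ℂ) + (β:ℂ) • B = (β:ℂ) • N₂ := by
    rw [hN₂def, smul_add, smul_smul, hβc, one_smul]
  have h2 : ((β:ℂ) • N₂)⁻¹ = ((β:ℂ)⁻¹) • N₂⁻¹ := by
    apply Matrix.inv_eq_right_inv
    rw [Matrix.smul_mul, Matrix.mul_smul, smul_smul, Matrix.mul_nonsing_inv _ hN₂u,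
      mul_inv_cancel₀ (by exact_mod_cast hβ0.ne' : (β:ℂ) ≠ 0), one_smul]
  have hrw : (β:ℂ) • A * (1 + (β:ℂ) • B)⁻¹ = A * N₂⁻¹ := by
    rw [h1, h2, Matrix.smul_mul, Matrix.mul_smul, smul_smul,
      mul_inv_cancel₀ (by exact_mod_cast hβ0.ne' : (β:ℂ) ≠ 0), one_smul]
  rw [hrw, fop_det_sandwich hA N₁, fop_det_sandwich hA N₂]
  have hss : hA.sqrt * hA.sqrt = A := hA.sqrt_mul_self
  have hsH : hA.sqrtᴴ = hA.sqrt := hA.posSemidef_sqrt.1.eq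
  set s := hA.sqrt with hsdef
  have hP : (s * N₁⁻¹ * s).PosSemidef := fop_psd_sandwich hA hN₁
  set D : Matrix m m ℂ := N₂⁻¹ - N₁⁻¹ with hDdef
  have hDeq : D = ((1 - c : ℝ) : ℂ) • (N₂⁻¹ * N₁⁻¹) := by
    have e1 : N₁ - N₂ = ((1 - c : ℝ):ℂ) • (1 : Matrix m m ℂ) := by
      rw [hN₁def, hN₂def, Complex.ofReal_sub, Complex.ofReal_one, sub_smul, one_smul]
      abel
    have e2 : N₂⁻¹ * (N₁ - N₂) * N₁⁻¹ = D := by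
      rw [Matrix.mul_sub, Matrix.sub_mul, Matrix.mul_assoc N₂⁻¹ N₁ N₁⁻¹,
        Matrix.mul_nonsing_inv _ hN₁u, Matrix.mul_one, Matrix.nonsing_inv_mul _ hN₂u,
        Matrix.one_mul, hDdef]
    rw [← e2, e1, mul_smul_comm, smul_mul_assoc, Matrix.mul_one]
  have hBB : (B * B).PosSemidef := by
    have := Matrix.posSemidef_self_mul_conjTranspose B
    rwa [hB.1.eq] at this
  have hProd : (N₁ * N₂).PosDef := by
    have hexp : N₁ * N₂ = (c:ℂ) • 1 + (((1 + c : ℝ):ℂ) • B + B * B) := by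
      rw [hN₁def, hN₂def]
      rw [Matrix.add_mul, Matrix.mul_add, Matrix.mul_add, Matrix.one_mul, Matrix.one_mul,
        mul_smul_comm, Matrix.mul_one, Complex.ofReal_add, Complex.ofReal_one, add_smul, one_smul]
      abel
    rw [hexp]
    exact (fop_smul_pd hc0 Matrix.PosDef.one).add_posSemidef
      ((fop_smul_psd (by linarith) hB).add hBB)
  have hD : D.PosDef := by
    rw [hDeq, ← Matrix.mul_inv_rev]
    exact fop_smul_pd (by linarith) hProd.inv
  set R : Matrix m m ℂ := s * D * s with hRdef
  have hR : R.PosSemidef := by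
    have := hD.posSemidef.mul_mul_conjTranspose_same s; rwa [hsH] at this
  have hs0 : s ≠ 0 := fun h => hA0 (by rw [← hss, h, Matrix.mul_zero])
  have hR0 : R ≠ 0 := by
    intro h
    have hdd : hD.posSemidef.sqrt * hD.posSemidef.sqrt = D := hD.posSemidef.sqrt_mul_self
    have hdH : hD.posSemidef.sqrtᴴ = hD.posSemidef.sqrt := hD.posSemidef.posSemidef_sqrt.1.eq
    set d := hD.posSemidef.sqrt with hddef
    have hddet : IsUnit d.det := by
      have h2 : d.det * d.det = D.det := by rw [← Matrix.det_mul, hdd]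
      have h3 : D.det ≠ 0 := hD.det_pos.ne'
      exact (show d.det ≠ 0 from fun hc => h3 (by rw [← h2, hc, mul_zero])).isUnit
    have hRe : R = (s * d) * (s * d)ᴴ := by
      rw [Matrix.conjTranspose_mul, hdH, hsH, hRdef, ← hdd]
      noncomm_ring
    rw [hRe] at h
    have hsd : s * d = 0 := Matrix.self_mul_conjTranspose_eq_zero.mp h
    apply hs0
    have := congrArg (· * d⁻¹) hsd
    simpa [Matrix.mul_assoc, Matrix.mul_nonsing_inv _ hddet] using this
  have hPR : s * N₂⁻¹ * s = s * N₁⁻¹ * s + R := by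
    have hN : N₂⁻¹ = N₁⁻¹ + D := by rw [hDdef]; abel
    rw [hN, Matrix.mul_add, Matrix.add_mul, hRdef]
  rw [hPR, ← add_assoc]
  exact fop_det_lt_det_add hP hR hR0

end FopHelpers

/-- At any optimum of the feasibility optimization problem FOP (maximizing
`min_l I_l(Σ_{1:L},Φ)/I_l⁰` under the sum power constraint `∑ Tr(Σ_l) ≤ P_T`) whose optimal
value `α` is strictly positive, the full power is used: `∑ Tr(Σ̃_l) = P_T`. -/
theorem fop_full_power {L : ℕ} (hL : 0 < L) (nT nR : Fin L → ℕ)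
    (H : ∀ l k : Fin L, Matrix (Fin (nR l)) (Fin (nT k)) ℂ)
    (Φ : Fin L → Fin L → ℝ)
    (hΦ01 : ∀ l k, Φ l k = 0 ∨ Φ l k = 1) (hΦdiag : ∀ l, Φ l l = 0)
    (I0 : Fin L → ℝ) (hI0 : ∀ l, 0 < I0 l)
    (PT : ℝ) (hPT : 0 < PT)
    (St : ∀ l : Fin L, Matrix (Fin (nT l)) (Fin (nT l)) ℂ)
    (hpsd : ∀ l, (St l).PosSemidef)
    (hpow : (∑ l : Fin L, (St l).trace).re ≤ PT)
    (hopt : ∀ S : ∀ l : Fin L, Matrix (Fin (nT l)) (Fin (nT l)) ℂ,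
      (∀ l, (S l).PosSemidef) → (∑ l : Fin L, (S l).trace).re ≤ PT →
      (⨅ l : Fin L, linkRate nT nR H Φ S l / I0 l) ≤
        ⨅ l : Fin L, linkRate nT nR H Φ St l / I0 l)
    (hα : 0 < ⨅ l : Fin L, linkRate nT nR H Φ St l / I0 l) :
    (∑ l : Fin L, (St l).trace).re = PT := by
  haveI : Nonempty (Fin L) := ⟨⟨0, hL⟩⟩
  by_contra hne
  have hTlt : (∑ l : Fin L, (St l).trace).re < PT := lt_of_le_of_ne hpow hne
  have hbdd : ∀ f : Fin L → ℝ, BddBelow (Set.range f) := fun f => (Set.finite_range f).bddBelow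
  have hαle : ∀ l, (⨅ l : Fin L, linkRate nT nR H Φ St l / I0 l) ≤
      linkRate nT nR H Φ St l / I0 l := fun l => ciInf_le (hbdd _) l
  have hrate_pos : ∀ l, 0 < linkRate nT nR H Φ St l := by
    intro l
    have h1 : 0 < linkRate nT nR H Φ St l / I0 l := lt_of_lt_of_le hα (hαle l)
    have h2 := mul_pos h1 (hI0 l)
    rwa [div_mul_cancel₀ _ (hI0 l).ne'] at h2
  have hAl : ∀ l, (H l l * St l * (H l l)ᴴ).PosSemidef :=
    fun l => (hpsd l).mul_mul_conjTranspose_same (H l l)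
  have hBl : ∀ l, (∑ k : Fin L, (Φ l k : ℂ) • (H l k * St k * (H l k)ᴴ)).PosSemidef := by
    intro l
    refine Finset.sum_induction _ _ (fun a b ha hb => ha.add hb) Matrix.PosSemidef.zero ?_
    intro k _
    have hΦnn : 0 ≤ Φ l k := by rcases hΦ01 l k with h | h <;> rw [h] <;> norm_num
    exact fop_smul_psd hΦnn ((hpsd k).mul_mul_conjTranspose_same (H l k))
  have hICpd : ∀ (S : ∀ l : Fin L, Matrix (Fin (nT l)) (Fin (nT l)) ℂ),
      (∀ l, (S l).PosSemidef) → ∀ l, (interfCov nT nR H Φ S l).PosDef := by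
    intro S hS l
    refine Matrix.PosDef.one.add_posSemidef ?_
    refine Finset.sum_induction _ _ (fun a b ha hb => ha.add hb) Matrix.PosSemidef.zero ?_
    intro k _
    have hΦnn : 0 ≤ Φ l k := by rcases hΦ01 l k with h | h <;> rw [h] <;> norm_num
    exact fop_smul_psd hΦnn ((hS k).mul_mul_conjTranspose_same (H l k))
  have hA0 : ∀ l, H l l * St l * (H l l)ᴴ ≠ 0 := by
    intro l h0
    have hz : linkRate nT nR H Φ St l = 0 := by
      show Real.log _ = 0
      rw [h0, Matrix.zero_mul, add_zero, Matrix.det_one]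
      simp
    linarith [hrate_pos l]
  have hSt0 : St ⟨0, hL⟩ ≠ 0 := by
    intro h
    exact hA0 ⟨0, hL⟩ (by rw [h, Matrix.mul_zero, Matrix.zero_mul])
  set T : ℝ := (∑ l : Fin L, (St l).trace).re with hTdef
  have hTsum : T = ∑ l : Fin L, ((St l).trace).re := Complex.re_sum _ _
  have hTpos : 0 < T := by
    rw [hTsum]
    refine Finset.sum_pos' (fun l _ => (fop_trace_psd (hpsd l)).1) ?_
    exact ⟨⟨0, hL⟩, Finset.mem_univ _, (fop_trace_psd (hpsd ⟨0, hL⟩)).2.2 hSt0⟩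
  set β : ℝ := PT / T with hβdef
  have hβ : 1 < β := (one_lt_div hTpos).mpr hTlt
  have hβ0 : (0:ℝ) < β := lt_trans one_pos hβ
  set S' : ∀ l : Fin L, Matrix (Fin (nT l)) (Fin (nT l)) ℂ := fun l => (β:ℂ) • St l with hS'def
  have hS'psd : ∀ l, (S' l).PosSemidef := fun l => fop_smul_psd hβ0.le (hpsd l)
  have hS'pow : (∑ l : Fin L, (S' l).trace).re ≤ PT := by
    have hsum : ∑ l : Fin L, (S' l).trace = (β:ℂ) * ∑ l : Fin L, (St l).trace := by
      rw [Finset.mul_sum]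
      exact Finset.sum_congr rfl fun l _ => by rw [hS'def, Matrix.trace_smul, smul_eq_mul]
    rw [hsum, Complex.re_ofReal_mul, ← hTdef, hβdef, div_mul_cancel₀ _ hTpos.ne']
  have hIC : ∀ l, interfCov nT nR H Φ S' l =
      1 + (β:ℂ) • ∑ k : Fin L, (Φ l k : ℂ) • (H l k * St k * (H l k)ᴴ) := by
    intro l
    show (1 : Matrix _ _ ℂ) + ∑ k : Fin L, (Φ l k : ℂ) • (H l k * ((β:ℂ) • St k) * (H l k)ᴴ) = _
    congr 1
    rw [Finset.smul_sum]
    refine Finset.sum_congr rfl fun k _ => ?_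
    rw [Matrix.mul_smul, Matrix.smul_mul, smul_comm]
  have hrate_lt : ∀ l, linkRate nT nR H Φ St l < linkRate nT nR H Φ S' l := by
    intro l
    have hnum : H l l * S' l * (H l l)ᴴ = (β:ℂ) • (H l l * St l * (H l l)ᴴ) := by
      simp only [hS'def]
      rw [Matrix.mul_smul, Matrix.smul_mul]
    show Real.log _ < Real.log _
    rw [hnum, hIC l]
    have hLHS : (interfCov nT nR H Φ St l) =
        1 + ∑ k : Fin L, (Φ l k : ℂ) • (H l k * St k * (H l k)ᴴ) := rfl
    rw [hLHS]
    exact Real.log_lt_log (fop_det_re_pos (hAl l) (by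
        have := hICpd St hpsd l
        rwa [hLHS] at this))
      (fop_core (hAl l) (hBl l) (hA0 l) hβ)
  obtain ⟨l₀, hl₀⟩ := Finite.exists_min (fun l => linkRate nT nR H Φ S' l / I0 l)
  have hinf_eq : (⨅ l : Fin L, linkRate nT nR H Φ S' l / I0 l) =
      linkRate nT nR H Φ S' l₀ / I0 l₀ :=
    le_antisymm (ciInf_le (hbdd _) l₀) (le_ciInf hl₀)
  have hlt : (⨅ l : Fin L, linkRate nT nR H Φ St l / I0 l) <
      ⨅ l : Fin L, linkRate nT nR H Φ S' l / I0 l := by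
    rw [hinf_eq]
    calc (⨅ l : Fin L, linkRate nT nR H Φ St l / I0 l)
        ≤ linkRate nT nR H Φ St l₀ / I0 l₀ := hαle l₀
      _ < linkRate nT nR H Φ S' l₀ / I0 l₀ :=
          div_lt_div_of_pos_right (hrate_lt l₀) (hI0 l₀)
  exact absurd (hopt S' hS'psd hS'pow) (not_le.mpr hlt)
end

section
/- Let I_l^0 > 0 be target rates, P_T > 0, and let ν_1,…,ν_L ≥ 0 be weights with ∑_l ν_l I_l^0 > 0. Suppose Σ̃_{1:L} is a family of positive semidefinite input covariance matrices with ∑_l Tr(Σ̃_l) ≤ P_T that maximizes the weighted sum rate ∑_l ν_l I_l(Σ_{1:L}, Φ) over all positive semidefinite Σ_{1:L} with ∑_l Tr(Σ_l) ≤ P_T, and that moreover satisfies I_l(Σ̃_{1:L}, Φ) = α I_l^0 for every l and some α ≥ 0. Then Σ̃_{1:L} is a global optimum of the feasibility optimization problem FOP: for every positive semidefinite Σ_{1:L} with ∑_l Tr(Σ_l) ≤ P_T one has min_{1≤l≤L} I_l(Σ_{1:L}, Φ)/I_l^0 ≤ α = min_{1≤l≤L} I_l(Σ̃_{1:L}, Φ)/I_l^0.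 -/
open Matrix BigOperators
open scoped ComplexOrder

/-- If `Σ̃_{1:L}` maximizes the weighted sum rate `∑ ν_l I_l` (with nonnegative
weights `ν`, `∑ ν_l I_l⁰ > 0`) under the sum power constraint `P_T`, and its rates are
proportional to the targets, `I_l(Σ̃,Φ) = α I_l⁰` for all `l`, then `Σ̃_{1:L}` is a global
optimum of FOP: every feasible `Σ_{1:L}` satisfies
`min_l I_l(Σ,Φ)/I_l⁰ ≤ α = min_l I_l(Σ̃,Φ)/I_l⁰`. -/
theorem wsr_opt_implies_fop_opt {L : ℕ} (hL : 0 < L) (nT nR : Fin L → ℕ)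
    (H : ∀ l k : Fin L, Matrix (Fin (nR l)) (Fin (nT k)) ℂ)
    (Φ : Fin L → Fin L → ℝ)
    (hΦ01 : ∀ l k, Φ l k = 0 ∨ Φ l k = 1) (hΦdiag : ∀ l, Φ l l = 0)
    (I0 : Fin L → ℝ) (hI0 : ∀ l, 0 < I0 l)
    (PT : ℝ) (hPT : 0 < PT)
    (ν : Fin L → ℝ) (hν : ∀ l, 0 ≤ ν l) (hνI0 : 0 < ∑ l : Fin L, ν l * I0 l)
    (St : ∀ l : Fin L, Matrix (Fin (nT l)) (Fin (nT l)) ℂ)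
    (hpsd : ∀ l, (St l).PosSemidef)
    (hpow : (∑ l : Fin L, (St l).trace).re ≤ PT)
    (α : ℝ) (hα : 0 ≤ α)
    (hrates : ∀ l, linkRate nT nR H Φ St l = α * I0 l)
    (hwsr : ∀ S : ∀ l : Fin L, Matrix (Fin (nT l)) (Fin (nT l)) ℂ,
      (∀ l, (S l).PosSemidef) → (∑ l : Fin L, (S l).trace).re ≤ PT →
      ∑ l : Fin L, ν l * linkRate nT nR H Φ S l ≤
        ∑ l : Fin L, ν l * linkRate nT nR H Φ St l) :
    (∀ S : ∀ l : Fin L, Matrix (Fin (nT l)) (Fin (nT l)) ℂ,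
      (∀ l, (S l).PosSemidef) → (∑ l : Fin L, (S l).trace).re ≤ PT →
      (⨅ l : Fin L, linkRate nT nR H Φ S l / I0 l) ≤ α) ∧
    α = ⨅ l : Fin L, linkRate nT nR H Φ St l / I0 l := by
  haveI : Nonempty (Fin L) := ⟨⟨0, hL⟩⟩
  have heq : ∀ l, linkRate nT nR H Φ St l / I0 l = α := by
    intro l
    rw [hrates l, mul_div_assoc, div_self (hI0 l).ne', mul_one]
  constructor
  · intro S hSpsd hSpow
    by_contra h
    push_neg at h
    have hall : ∀ l, α * I0 l < linkRate nT nR H Φ S l := by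
      intro l
      have h1 : (⨅ l : Fin L, linkRate nT nR H Φ S l / I0 l) ≤
          linkRate nT nR H Φ S l / I0 l :=
        ciInf_le (Finite.bddBelow_range _) l
      have h2 : α < linkRate nT nR H Φ S l / I0 l := lt_of_lt_of_le h h1
      exact (lt_div_iff₀ (hI0 l)).mp h2
    obtain ⟨l0, _, hl0⟩ := Finset.exists_lt_of_sum_lt (by
      simpa using hνI0 : ∑ l : Fin L, (0:ℝ) < ∑ l : Fin L, ν l * I0 l)
    have hν0 : 0 < ν l0 := by
      by_contra hc
      push_neg at hc
      have := mul_nonpos_of_nonpos_of_nonneg hc (hI0 l0).le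
      linarith
    have hstrict : ∑ l : Fin L, ν l * (α * I0 l) <
        ∑ l : Fin L, ν l * linkRate nT nR H Φ S l := by
      apply Finset.sum_lt_sum
      · intro l _
        exact mul_le_mul_of_nonneg_left (hall l).le (hν l)
      · exact ⟨l0, Finset.mem_univ l0, mul_lt_mul_of_pos_left (hall l0) hν0⟩
    have hle := hwsr S hSpsd hSpow
    have heq2 : ∑ l : Fin L, ν l * linkRate nT nR H Φ St l =
        ∑ l : Fin L, ν l * (α * I0 l) := by
      apply Finset.sum_congr rfl
      intro l _
      rw [hrates l]
    linarith
  · simp only [heq]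
    exact (ciInf_const).symm
end

section
/- Let H ∈ ℂ^{r×n}, let Ω ∈ ℂ^{r×r} be positive definite, and let x_1, …, x_M ∈ ℂ^n be arbitrary vectors. Then ∑_{m=1}^M log(1 + x_m† H† (Ω + ∑_{i=m+1}^M H x_i x_i† H†)^{-1} H x_m) = log det(I + H (∑_{m=1}^M x_m x_m†) H† Ω^{-1}). In words: when an input covariance matrix Σ = ∑_m x_m x_m† is decomposed into streams that are decoded by MMSE filtering with successive interference cancellation in the order m = 1,…,M, the sum of the per-stream rates log(1 + SINR_m) equals the mutual information log det(I + H Σ H† Ω^{-1}) of the link; i.e., the decomposition is information lossless. -/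
open Matrix BigOperators
open scoped ComplexOrder

private lemma psd_sum' {r : ℕ} {ι : Type*} (s : Finset ι) (V : ι → Matrix (Fin r) (Fin r) ℂ)
    (h : ∀ i ∈ s, (V i).PosSemidef) : (∑ i ∈ s, V i).PosSemidef := by
  classical
  induction s using Finset.induction_on with
  | empty => simpa using Matrix.PosSemidef.zero
  | insert _ _ hnot ih =>
    rw [Finset.sum_insert hnot]
    exact ((h _ (Finset.mem_insert_self _ _)).add
      (ih fun i hi => h i (Finset.mem_insert_of_mem hi)))

private lemma det_rank_one' {r : ℕ} (A : Matrix (Fin r) (Fin r) ℂ) (hA : A.PosDef)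
    (v : Fin r → ℂ) :
    (A + vecMulVec v (star v)).det = A.det * (1 + star v ⬝ᵥ (A⁻¹ *ᵥ v)) := by
  rw [vecMulVec_eq Unit, det_add_replicateCol_mul_replicateRow hA.det_pos.ne'.isUnit]
  congr 1
  rw [det_unique]
  have : (replicateRow Unit (star v) * A⁻¹ * replicateCol Unit v) default default
      = star v ⬝ᵥ (A⁻¹ *ᵥ v) := by
    simp only [mul_apply, replicateRow_apply, replicateCol_apply, dotProduct, mulVec, Pi.star_apply,
      Finset.sum_mul, Finset.mul_sum]
    rw [Finset.sum_comm]
    exact Finset.sum_congr rfl fun k _ => Finset.sum_congr rfl fun l _ => by ring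
  simp [this]

private lemma conj_vecMulVec' {r n : ℕ} (H : Matrix (Fin r) (Fin n) ℂ) (v : Fin n → ℂ) :
    H * vecMulVec v (star v) * Hᴴ = vecMulVec (H *ᵥ v) (star (H *ᵥ v)) := by
  ext i j
  simp only [mul_apply, vecMulVec_apply, conjTranspose_apply, mulVec, dotProduct,
    Pi.star_apply, Finset.sum_mul, Finset.mul_sum, star_sum, star_mul']
  refine Finset.sum_congr rfl fun k _ => Finset.sum_congr rfl fun l _ => ?_
  ring

/-- For any stream decomposition `x_1, …, x_M` of an input covariance matrix
`Σ = ∑ₘ xₘ xₘᴴ` over a channel `H` with positive definite interference-plus-noise covariance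
`Ω`, MMSE-SIC decoding in the order `m = 1, …, M` is information lossless: the sum of the
per-stream rates `log(1 + SINR_m)` equals the mutual information `log det(I + H Σ Hᴴ Ω⁻¹)`. -/
theorem mmse_sic_information_lossless {r n : ℕ} (M : ℕ)
    (H : Matrix (Fin r) (Fin n) ℂ)
    (Ω : Matrix (Fin r) (Fin r) ℂ) (hΩ : Ω.PosDef)
    (x : Fin M → (Fin n → ℂ)) :
    ∑ m : Fin M,
        Real.log (1 +
          (star (H *ᵥ x m) ⬝ᵥ
            (((Ω + ∑ i ∈ Finset.Ioi m,
                H * vecMulVec (x i) (star (x i)) * Hᴴ)⁻¹) *ᵥ (H *ᵥ x m))).re)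
      = Real.log
          ((1 + H * (∑ m : Fin M, vecMulVec (x m) (star (x m))) * Hᴴ * Ω⁻¹).det.re) := by
  classical
  set V : Fin M → Matrix (Fin r) (Fin r) ℂ :=
    fun i => vecMulVec (H *ᵥ x i) (star (H *ᵥ x i)) with hV
  have hVpsd : ∀ i, (V i).PosSemidef := by
    intro i
    rw [hV]
    dsimp only
    rw [vecMulVec_eq Unit, ← conjTranspose_replicateCol]
    exact posSemidef_self_mul_conjTranspose _
  set g : ℕ → Matrix (Fin r) (Fin r) ℂ :=
    fun k => Ω + ∑ i ∈ Finset.univ.filter (fun i : Fin M => k ≤ i.val), V i with hg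
  have hgpd : ∀ k, (g k).PosDef := fun k =>
    hΩ.add_posSemidef (psd_sum' _ _ fun i _ => hVpsd i)
  have hdet : ∀ k, (g k).det = (((g k).det.re : ℝ) : ℂ) ∧ 0 < (g k).det.re := by
    intro k
    have h := (hgpd k).det_pos
    rw [Complex.lt_def] at h
    exact ⟨Complex.ext_iff.2 ⟨rfl, h.2.symm⟩, h.1⟩
  set L : ℕ → ℝ := fun k => Real.log ((g k).det.re) with hL
  have hIoi : ∀ m : Fin M,
      Ω + ∑ i ∈ Finset.Ioi m, H * vecMulVec (x i) (star (x i)) * Hᴴ = g (m.val + 1) := by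
    intro m
    rw [hg]
    dsimp only
    congr 1
    rw [Finset.sum_congr rfl (fun i _ => conj_vecMulVec' H (x i))]
    refine Finset.sum_congr ?_ fun i _ => rfl
    ext i
    simp only [Finset.mem_Ioi, Finset.mem_filter, Finset.mem_univ, true_and, Fin.lt_def,
      Nat.lt_iff_add_one_le]
  have step : ∀ m : Fin M,
      Real.log (1 + (star (H *ᵥ x m) ⬝ᵥ ((g (m.val + 1))⁻¹ *ᵥ (H *ᵥ x m))).re)
        = L m.val - L (m.val + 1) := by
    intro m
    set A := g (m.val + 1) with hA
    have hApd : A.PosDef := hgpd _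
    set q : ℂ := star (H *ᵥ x m) ⬝ᵥ (A⁻¹ *ᵥ (H *ᵥ x m)) with hq
    have hq0 : 0 ≤ q := hApd.inv.posSemidef.dotProduct_mulVec_nonneg _
    rw [Complex.le_def] at hq0
    simp only [Complex.zero_re, Complex.zero_im] at hq0
    have hqre : q = ((q.re : ℝ) : ℂ) := Complex.ext_iff.2 ⟨rfl, hq0.2.symm⟩
    have hsplit : g m.val = A + V m := by
      rw [hA, hg]
      dsimp only
      have hins : Finset.univ.filter (fun i : Fin M => m.val ≤ i.val)
          = insert m (Finset.univ.filter (fun i : Fin M => m.val + 1 ≤ i.val)) := by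
        ext i
        simp only [Finset.mem_filter, Finset.mem_univ, true_and, Finset.mem_insert]
        constructor
        · intro h
          rcases eq_or_lt_of_le h with h' | h'
          · exact Or.inl (Fin.ext h'.symm)
          · exact Or.inr h'
        · rintro (rfl | h)
          · exact le_rfl
          · omega
      rw [hins, Finset.sum_insert (by simp)]
      abel
    have hdetstep : (g m.val).det = A.det * (1 + q) := by
      rw [hsplit, hV]
      exact det_rank_one' A hApd _
    have ha := hdet (m.val + 1)
    have hb := hdet m.val
    have hbval : (g m.val).det.re = A.det.re * (1 + q.re) := by
      have : (((g m.val).det.re : ℝ) : ℂ) = (((A.det.re * (1 + q.re) : ℝ)) : ℂ) := by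
        rw [← hb.1, hdetstep, ha.1, hqre]
        push_cast
        simp only [Complex.ofReal_re]
      exact_mod_cast this
    have h1q : (0:ℝ) < 1 + q.re := by linarith [hq0.1]
    rw [hL]
    dsimp only
    rw [hbval, Real.log_mul (ne_of_gt ha.2) (ne_of_gt h1q)]
    ring
  have lhs_eq : ∑ m : Fin M,
        Real.log (1 +
          (star (H *ᵥ x m) ⬝ᵥ
            (((Ω + ∑ i ∈ Finset.Ioi m,
                H * vecMulVec (x i) (star (x i)) * Hᴴ)⁻¹) *ᵥ (H *ᵥ x m))).re)
      = L 0 - L M := by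
    have h1 : ∑ m : Fin M,
        Real.log (1 +
          (star (H *ᵥ x m) ⬝ᵥ
            (((Ω + ∑ i ∈ Finset.Ioi m,
                H * vecMulVec (x i) (star (x i)) * Hᴴ)⁻¹) *ᵥ (H *ᵥ x m))).re)
        = ∑ m : Fin M, (L m.val - L (m.val + 1)) :=
      Finset.sum_congr rfl fun m _ => by rw [hIoi m]; exact step m
    rw [h1, Fin.sum_univ_eq_sum_range (fun k => L k - L (k + 1)) M]
    exact Finset.sum_range_sub' L M
  rw [lhs_eq]
  have hgM : g M = Ω := by
    rw [hg]
    dsimp only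
    have : Finset.univ.filter (fun i : Fin M => M ≤ i.val) = ∅ := by
      ext i
      simp only [Finset.mem_filter, Finset.mem_univ, true_and,
        Finset.notMem_empty, iff_false, not_le]
      exact i.isLt
    rw [this]
    simp
  have hg0 : g 0 = Ω + ∑ i : Fin M, V i := by
    rw [hg]
    dsimp only
    congr 1
    refine Finset.sum_congr ?_ fun i _ => rfl
    simp
  have hS : H * (∑ m : Fin M, vecMulVec (x m) (star (x m))) * Hᴴ = ∑ i : Fin M, V i := by
    rw [Matrix.mul_sum, Matrix.sum_mul]
    exact Finset.sum_congr rfl fun i _ => conj_vecMulVec' H (x i)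
  have hmul : (1 : Matrix (Fin r) (Fin r) ℂ)
      + H * (∑ m : Fin M, vecMulVec (x m) (star (x m))) * Hᴴ * Ω⁻¹
      = g 0 * Ω⁻¹ := by
    rw [hg0, hS, Matrix.add_mul, Matrix.mul_nonsing_inv _ hΩ.det_pos.ne'.isUnit]
  have hΩdet := hdet M
  rw [hgM] at hΩdet
  have h0det := hdet 0
  have hdetval : (1 + H * (∑ m : Fin M, vecMulVec (x m) (star (x m))) * Hᴴ * Ω⁻¹).det
      = (((g 0).det.re / Ω.det.re : ℝ) : ℂ) := by
    rw [hmul, det_mul, det_nonsing_inv, Ring.inverse_eq_inv', h0det.1, hΩdet.1]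
    push_cast
    simp only [Complex.ofReal_re]
    ring
  have hLM : L 0 - L M = Real.log ((g 0).det.re) - Real.log (Ω.det.re) := by
    rw [hL]
    dsimp only
    rw [hgM]
  rw [hLM, hdetval, Complex.ofReal_re,
    Real.log_div (ne_of_gt h0det.2) (ne_of_gt hΩdet.2)]
end
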